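/- Let ρ be an N-qubit symmetric state and fix a bipartition S|S̄ with |S| ≤ N−|S|. If the reduced state ρ_{S̄} = Tr_S ρ has a nontrivial kernel (dimension k_{S̄} > 0) with rank r_{S̄}, then rank(ρ) ≤ r_{S̄}; symmetrically, if ρ_S has nontrivial kernel with rank r_S, then rank(ρ) ≤ r_S. -/

import Mathlib

open scoped ComplexOrder
open Polynomial

abbrev QIdx (N : ℕ) := Fin N → Fin 2

def SymmVec {N : ℕ} (ψ : QIdx N → ℂ) : Prop :=
  ∀ σ : Equiv.Perm (Fin N), ∀ f : QIdx N, ψ (f ∘ σ) = ψ f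

def SuppSymm {N : ℕ} (ρ : Matrix (QIdx N) (QIdx N) ℂ) : Prop :=
  ∀ v, SymmVec (ρ.mulVec v)

/-- Partial trace over the qubits in `S`: the reduced operator on the qubits outside `S`. -/
noncomputable def ptrace {N : ℕ} (S : Finset (Fin N)) (ρ : Matrix (QIdx N) (QIdx N) ℂ) :
    Matrix ({i : Fin N // i ∉ S} → Fin 2) ({i : Fin N // i ∉ S} → Fin 2) ℂ :=
  Matrix.of fun x y => ∑ z : ({i : Fin N // i ∈ S} → Fin 2),
    ρ (fun i => if h : i ∈ S then z ⟨i, h⟩ else x ⟨i, h⟩)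
      (fun i => if h : i ∈ S then z ⟨i, h⟩ else y ⟨i, h⟩)


namespace Stmt7Aux

open Matrix

variable {ι : Type*} [Fintype ι] [DecidableEq ι]

/-- Hamming weight. -/
def wt (f : ι → Fin 2) : ℕ := ∑ i, (f i : ℕ)

omit [DecidableEq ι] in
lemma wt_le (f : ι → Fin 2) : wt f ≤ Fintype.card ι := by
  classical
  calc wt f ≤ ∑ _i : ι, 1 := Finset.sum_le_sum (fun i _ => by omega)
  _ = Fintype.card ι := by simp

lemma exists_wt (j : ℕ) (hj : j ≤ Fintype.card ι) : ∃ f : ι → Fin 2, wt f = j := by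
  classical
  obtain ⟨s, -, hs⟩ := Finset.exists_subset_card_eq (s := (Finset.univ : Finset ι)) (n := j)
    (by simpa using hj)
  refine ⟨fun i => if i ∈ s then 1 else 0, ?_⟩
  unfold wt
  have : ∀ i : ι, ((if i ∈ s then (1 : Fin 2) else 0 : Fin 2) : ℕ)
      = if i ∈ s then 1 else 0 := fun i => by split <;> rfl
  rw [Finset.sum_congr rfl fun i _ => this i]
  simp [Finset.sum_ite_mem, hs]

lemma card_subtype_eq_wt (f : ι → Fin 2) : Fintype.card {i // f i = 1} = wt f := by
  rw [Fintype.card_subtype]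
  unfold wt
  rw [Finset.card_filter]
  refine Finset.sum_congr rfl fun i _ => ?_
  rcases (by omega : (f i : ℕ) = 0 ∨ (f i : ℕ) = 1) with h | h
  · rw [if_neg, h]
    intro hc; rw [hc] at h; simp at h
  · rw [if_pos, h]
    exact Fin.ext h

lemma exists_perm_of_wt_eq {f g : ι → Fin 2} (h : wt f = wt g) :
    ∃ σ : Equiv.Perm ι, f ∘ σ = g := by
  classical
  have h1 : Fintype.card {i // g i = 1} = Fintype.card {i // f i = 1} := by
    rw [card_subtype_eq_wt, card_subtype_eq_wt, h]
  have h0 : Fintype.card {i // ¬ g i = 1} = Fintype.card {i // ¬ f i = 1} := by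
    rw [Fintype.card_subtype_compl, Fintype.card_subtype_compl, h1]
  let e1 : {i // g i = 1} ≃ {i // f i = 1} := Fintype.equivOfCardEq h1
  let e0 : {i // ¬ g i = 1} ≃ {i // ¬ f i = 1} := Fintype.equivOfCardEq h0
  have happ1 : ∀ i (hi : g i = 1), (e1.subtypeCongr e0) i = ↑(e1 ⟨i, hi⟩) := fun i hi => by
    simp only [Equiv.subtypeCongr, Equiv.trans_apply, Equiv.sumCongr_apply]
    rw [Equiv.sumCompl_symm_apply_of_pos (p := fun i => g i = 1) hi]
    simp
  have happ0 : ∀ i (hi : ¬ g i = 1), (e1.subtypeCongr e0) i = ↑(e0 ⟨i, hi⟩) := fun i hi => by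
    simp only [Equiv.subtypeCongr, Equiv.trans_apply, Equiv.sumCongr_apply]
    rw [Equiv.sumCompl_symm_apply_of_neg (p := fun i => g i = 1) hi]
    simp
  refine ⟨e1.subtypeCongr e0, funext fun i => ?_⟩
  by_cases hi : g i = 1
  · rw [Function.comp_apply, happ1 i hi, hi]
    exact (e1 ⟨i, hi⟩).2
  · rw [Function.comp_apply, happ0 i hi]
    have h2 : ¬ f ((e0 ⟨i, hi⟩ : {i // ¬ f i = 1}) : ι) = 1 := (e0 ⟨i, hi⟩).2
    have : ∀ a : Fin 2, ¬ a = 1 → a = 0 := by decide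
    rw [this _ h2, this _ hi]

/-- The "Dicke coordinates" linear map: `ψ ↦ ∑ f, ψ f • X ^ wt f`. -/
noncomputable def Lmap (ι : Type*) [Fintype ι] [DecidableEq ι] :
    ((ι → Fin 2) → ℂ) →ₗ[ℂ] ℂ[X] :=
  ∑ f : ι → Fin 2, (LinearMap.proj f).smulRight ((X : ℂ[X]) ^ wt f)

lemma Lmap_apply (ψ : (ι → Fin 2) → ℂ) :
    Lmap ι ψ = ∑ f : ι → Fin 2, ψ f • (X : ℂ[X]) ^ wt f := by
  simp [Lmap, LinearMap.sum_apply]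

lemma Lmap_coeff (ψ : (ι → Fin 2) → ℂ) (k : ℕ) :
    (Lmap ι ψ).coeff k = ∑ f ∈ Finset.univ.filter (fun f => wt f = k), ψ f := by
  rw [Lmap_apply, Polynomial.finset_sum_coeff]
  rw [Finset.sum_filter]
  refine Finset.sum_congr rfl fun f _ => ?_
  rw [Polynomial.coeff_smul, Polynomial.coeff_X_pow, smul_eq_mul]
  by_cases h : wt f = k
  · rw [if_pos h, if_pos h.symm, mul_one]
  · rw [if_neg h, if_neg (Ne.symm h), mul_zero]

lemma Lmap_single (f : ι → Fin 2) : Lmap ι (Pi.single f 1) = (X : ℂ[X]) ^ wt f := by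
  rw [Lmap_apply]
  rw [Finset.sum_eq_single f]
  · simp
  · intro g _ hg
    rw [Pi.single_eq_of_ne hg, zero_smul]
  · simp

lemma range_Lmap : LinearMap.range (Lmap ι) = degreeLT ℂ (Fintype.card ι + 1) := by
  apply le_antisymm
  · rintro p ⟨ψ, rfl⟩
    rw [Lmap_apply]
    refine Submodule.sum_mem _ fun f _ => Submodule.smul_mem _ _ ?_
    rw [Polynomial.mem_degreeLT, Polynomial.degree_X_pow]
    exact_mod_cast Nat.lt_succ_of_le (wt_le f)
  · rw [Polynomial.degreeLT_eq_span_X_pow, Submodule.span_le]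
    intro p hp
    simp only [Finset.coe_image, Finset.coe_range, Set.mem_image, Set.mem_Iio] at hp
    obtain ⟨k, hk, rfl⟩ := hp
    obtain ⟨f, hf⟩ := exists_wt k (Nat.lt_succ_iff.mp hk)
    exact ⟨Pi.single f 1, by rw [Lmap_single, hf]⟩

lemma finrank_degreeLT (n : ℕ) : Module.finrank ℂ (degreeLT ℂ n) = n := by
  rw [(Polynomial.degreeLTEquiv ℂ n).finrank_eq, Module.finrank_fintype_fun_eq_card,
    Fintype.card_fin]

lemma finrank_ker_Lmap :
    Module.finrank ℂ (LinearMap.ker (Lmap ι)) + (Fintype.card ι + 1)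
      = 2 ^ Fintype.card ι := by
  have h := LinearMap.finrank_range_add_finrank_ker (Lmap ι)
  rw [range_Lmap, finrank_degreeLT, Module.finrank_fintype_fun_eq_card,
    Fintype.card_fun, Fintype.card_fin] at h
  omega

/-- Kernel of `Lmap` is contained in the kernel of any matrix whose rows are
symmetric (invariant under permutations in the second argument). -/
lemma ker_Lmap_le_ker {M : Matrix (ι → Fin 2) (ι → Fin 2) ℂ}
    (hsym : ∀ g f (σ : Equiv.Perm ι), M g (f ∘ σ) = M g f) :
    LinearMap.ker (Lmap ι) ≤ LinearMap.ker M.mulVecLin := by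
  classical
  intro ψ hψ
  rw [LinearMap.mem_ker] at hψ ⊢
  rw [Matrix.mulVecLin_apply]
  funext g
  have hM : ∀ f f' : ι → Fin 2, wt f = wt f' → M g f = M g f' := by
    intro f f' h
    obtain ⟨σ, hσ⟩ := exists_perm_of_wt_eq h.symm
    rw [← hσ, hsym]
  set rep : ℕ → (ι → Fin 2) := fun k =>
    if h : ∃ f : ι → Fin 2, wt f = k then h.choose else (fun _ => 0) with hrep
  have hMrep : ∀ f : ι → Fin 2, M g f = M g (rep (wt f)) := by
    intro f
    have hex : ∃ f' : ι → Fin 2, wt f' = wt f := ⟨f, rfl⟩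
    refine hM _ _ ?_
    rw [hrep]
    simp only [dif_pos hex]
    exact (hex.choose_spec).symm
  have key : M.mulVec ψ g = ∑ k ∈ Finset.range (Fintype.card ι + 1),
      M g (rep k) * (Lmap ι ψ).coeff k := by
    rw [Matrix.mulVec]
    show (∑ f, M g f * ψ f) = _
    rw [← Finset.sum_fiberwise_of_maps_to
      (fun f (_ : f ∈ Finset.univ) => Finset.mem_range.mpr (Nat.lt_succ_of_le (wt_le f)))
      (fun f => M g f * ψ f)]
    refine Finset.sum_congr rfl fun k _ => ?_
    rw [Lmap_coeff, Finset.mul_sum]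
    refine Finset.sum_congr rfl fun f hf => ?_
    rw [Finset.mem_filter] at hf
    rw [hMrep f, hf.2]
  show M.mulVec ψ g = 0
  rw [key, hψ]
  simp

lemma exists_maxdeg (K : ℕ) (V : Submodule ℂ ℂ[X]) (hne : V ≠ ⊥)
    (hV : V ≤ degreeLT ℂ K) :
    ∃ p ∈ V, p ≠ 0 ∧ V ≤ degreeLT ℂ (p.natDegree + 1) := by
  induction K with
  | zero =>
    exfalso
    apply hne
    rw [eq_bot_iff]
    intro q hq
    have := Polynomial.mem_degreeLT.mp (hV hq)
    simp only [Nat.cast_zero] at this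
    rw [Submodule.mem_bot]
    exact Polynomial.degree_eq_bot.mp (Nat.WithBot.lt_zero_iff.mp (by exact_mod_cast this))
  | succ K ih =>
    by_cases h : ∃ p ∈ V, p ≠ 0 ∧ p.natDegree = K
    · obtain ⟨p, hp, hp0, hpd⟩ := h
      exact ⟨p, hp, hp0, by rw [hpd]; exact hV⟩
    · apply ih
      intro q hq
      by_cases hq0 : q = 0
      · simp [hq0, Submodule.zero_mem]
      · rw [Polynomial.mem_degreeLT, Polynomial.degree_eq_natDegree hq0]
        have hd := Polynomial.mem_degreeLT.mp (hV hq)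
        rw [Polynomial.degree_eq_natDegree hq0] at hd
        have h1 : q.natDegree < K + 1 := by exact_mod_cast hd
        have h2 : q.natDegree ≠ K := fun hc => h ⟨q, hq, hq0, hc⟩
        exact_mod_cast (by omega : q.natDegree < K)

/-- Iterated span `V + XV + ... + X^m V`. -/
noncomputable def powSpan (V : Submodule ℂ ℂ[X]) : ℕ → Submodule ℂ ℂ[X]
  | 0 => V
  | j + 1 => powSpan V j ⊔ V.map (LinearMap.mulLeft ℂ ((X : ℂ[X]) ^ (j + 1)))

lemma powSpan_le_degreeLT (V : Submodule ℂ ℂ[X]) (D : ℕ) (hV : V ≤ degreeLT ℂ (D + 1)) :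
    ∀ j, powSpan V j ≤ degreeLT ℂ (D + 1 + j) := by
  intro j
  induction j with
  | zero => exact hV
  | succ j ih =>
    rw [powSpan]
    apply sup_le
    · exact le_trans ih (Polynomial.degreeLT_mono (by omega))
    · rintro q ⟨p, hp, rfl⟩
      rw [Polynomial.mem_degreeLT]
      simp only [LinearMap.mulLeft_apply]
      by_cases hp0 : p = 0
      · rw [hp0, mul_zero, Polynomial.degree_zero]
        exact WithBot.bot_lt_coe _
      · have hd : p.degree < (D + 1 : ℕ) := Polynomial.mem_degreeLT.mp (hV hp)
        calc ((X : ℂ[X]) ^ (j+1) * p).degree ≤ (j+1 : ℕ) + p.degree := by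
              rw [Polynomial.degree_mul, Polynomial.degree_X_pow]
        _ < (j+1 : ℕ) + (D+1 : ℕ) := by
              rwa [WithBot.add_lt_add_iff_left (by exact WithBot.coe_ne_bot)]
        _ = ((D + 1 + (j+1) : ℕ) : WithBot ℕ) := by
              rw [← Nat.cast_add]; norm_cast; omega

lemma finrank_powSpan (V : Submodule ℂ ℂ[X]) (K : ℕ) (hne : V ≠ ⊥)
    (hV : V ≤ degreeLT ℂ K) (m : ℕ) :
    Module.finrank ℂ V + m ≤ Module.finrank ℂ (powSpan V m) := by
  obtain ⟨p, hpV, hp0, hVD⟩ := exists_maxdeg K V hne hV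
  set D := p.natDegree with hD
  have hdegLT : ∀ j, powSpan V j ≤ degreeLT ℂ (D + 1 + j) :=
    powSpan_le_degreeLT V D hVD
  have hfd : ∀ j, FiniteDimensional ℂ (powSpan V j) := by
    intro j
    have : FiniteDimensional ℂ (degreeLT ℂ (D + 1 + j)) := by
      apply FiniteDimensional.of_finrank_eq_succ (n := D + j)
      rw [finrank_degreeLT]; omega
    exact Submodule.finiteDimensional_of_le (hdegLT j)
  induction m with
  | zero => simp [powSpan]; exact le_rfl
  | succ m ih =>
    have hlt : powSpan V m < powSpan V (m + 1) := by
      rw [powSpan]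
      refine lt_of_le_of_ne le_sup_left fun hc => ?_
      have hmem : (X : ℂ[X]) ^ (m+1) * p ∈ powSpan V m := by
        rw [hc]
        exact le_sup_right (α := Submodule ℂ ℂ[X]) ⟨p, hpV, rfl⟩
      have hd := Polynomial.mem_degreeLT.mp (hdegLT m hmem)
      have hdeg : ((X : ℂ[X]) ^ (m+1) * p).degree = ((m + 1 + D : ℕ) : WithBot ℕ) := by
        rw [Polynomial.degree_mul, Polynomial.degree_X_pow,
          Polynomial.degree_eq_natDegree hp0, ← hD, ← Nat.cast_add]
      rw [hdeg] at hd
      have : m + 1 + D < D + 1 + m := by exact_mod_cast hd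
      omega
    have := @Submodule.finrank_lt_finrank_of_lt ℂ _ _ _ _ _ _ (hfd (m+1)) hlt
    omega

lemma poly_span (V : Submodule ℂ ℂ[X]) (K : ℕ) (hV : V ≤ degreeLT ℂ K) (hne : V ≠ ⊥)
    (m : ℕ) (T : Submodule ℂ ℂ[X]) [FiniteDimensional ℂ T]
    (hT : ∀ j ≤ m, V.map (LinearMap.mulLeft ℂ ((X : ℂ[X]) ^ j)) ≤ T) :
    Module.finrank ℂ V + m ≤ Module.finrank ℂ T := by
  have hsub : ∀ j ≤ m, powSpan V j ≤ T := by
    intro j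
    induction j with
    | zero =>
      intro _
      have h0 := hT 0 (by omega)
      refine le_trans ?_ h0
      intro q hq
      exact ⟨q, hq, by simp⟩
    | succ j ih =>
      intro hj
      rw [powSpan]
      exact sup_le (ih (by omega)) (hT (j+1) hj)
  calc Module.finrank ℂ V + m ≤ Module.finrank ℂ (powSpan V m) :=
        finrank_powSpan V K hne hV m
  _ ≤ Module.finrank ℂ T := Submodule.finrank_mono (hsub m le_rfl)

section Glue

variable {N : ℕ} (S : Finset (Fin N))

/-- Combine values on `S` and on its complement into a full assignment. -/
def glue (z : {i : Fin N // i ∈ S} → Fin 2) (x : {i : Fin N // i ∉ S} → Fin 2) :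
    QIdx N := fun i => if h : i ∈ S then z ⟨i, h⟩ else x ⟨i, h⟩

lemma ptrace_apply (ρ : Matrix (QIdx N) (QIdx N) ℂ) (x y) :
    ptrace S ρ x y = ∑ z : ({i : Fin N // i ∈ S} → Fin 2), ρ (glue S z x) (glue S z y) :=
  rfl

/-- The splitting equivalence. -/
def splitEquiv : (({i : Fin N // i ∈ S} → Fin 2) × ({i : Fin N // i ∉ S} → Fin 2))
    ≃ QIdx N where
  toFun zx := glue S zx.1 zx.2
  invFun f := (fun i => f i, fun i => f i)
  left_inv := by
    rintro ⟨z, x⟩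
    ext i
    · simp [glue, i.2]
    · simp [glue, i.2]
  right_inv := by
    intro f
    funext i
    by_cases h : i ∈ S <;> simp [glue, h]

/-- Embed a vector on the complement of `S`, with basis assignment `z` on `S`. -/
def emb (z : {i : Fin N // i ∈ S} → Fin 2) (φ : ({i : Fin N // i ∉ S} → Fin 2) → ℂ) :
    QIdx N → ℂ := fun f =>
  if (fun i : {i : Fin N // i ∈ S} => f i) = z then φ (fun i : {i : Fin N // i ∉ S} => f i)
  else 0

lemma emb_glue (z z' x φ) : emb S z φ (glue S z' x) = if z' = z then φ x else 0 := by
  have h1 : (fun i : {i : Fin N // i ∈ S} => glue S z' x i) = z' := by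
    funext i; simp [glue, i.2]
  have h2 : (fun i : {i : Fin N // i ∉ S} => glue S z' x i) = x := by
    funext i; simp [glue, i.2]
  rw [emb, h1, h2]

lemma wt_glue (z x) : wt (glue S z x) = wt z + wt x := by
  classical
  unfold wt
  rw [← Equiv.sum_comp (Equiv.sumCompl (· ∈ S)) (fun i => ((glue S z x i : ℕ)))]
  rw [Fintype.sum_sum_type]
  congr 1
  · refine Finset.sum_congr rfl fun i _ => ?_
    rw [Equiv.sumCompl_apply_inl]
    simp [glue, i.2]
  · refine Finset.sum_congr rfl fun i _ => ?_
    rw [Equiv.sumCompl_apply_inr]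
    simp [glue, i.2]

end Glue

section Symm

variable {N : ℕ} (S : Finset (Fin N))

/-- Extend a permutation of the complement of `S` to `Fin N`, fixing `S`. -/
def extPerm (τ : Equiv.Perm {i : Fin N // i ∉ S}) : Equiv.Perm (Fin N) :=
  (Equiv.sumCompl (· ∈ S)).symm.trans
    ((Equiv.sumCongr (Equiv.refl _) τ).trans (Equiv.sumCompl (· ∈ S)))

lemma extPerm_mem {τ : Equiv.Perm {i : Fin N // i ∉ S}} {i : Fin N} (h : i ∈ S) :
    extPerm S τ i = i := by
  simp only [extPerm, Equiv.trans_apply]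
  rw [Equiv.sumCompl_symm_apply_of_pos (p := (· ∈ S)) h]
  simp

lemma extPerm_not_mem {τ : Equiv.Perm {i : Fin N // i ∉ S}} {i : Fin N} (h : i ∉ S) :
    extPerm S τ i = ↑(τ ⟨i, h⟩) := by
  simp only [extPerm, Equiv.trans_apply]
  rw [Equiv.sumCompl_symm_apply_of_neg (p := (· ∈ S)) h]
  simp

lemma glue_comp_perm (z x) (τ : Equiv.Perm {i : Fin N // i ∉ S}) :
    glue S z (x ∘ τ) = glue S z x ∘ (extPerm S τ) := by
  funext i
  by_cases h : i ∈ S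
  · rw [Function.comp_apply, extPerm_mem S h]
    simp [glue, h]
  · rw [Function.comp_apply, extPerm_not_mem S h]
    have h2 : (↑(τ ⟨i, h⟩) : Fin N) ∉ S := (τ ⟨i, h⟩).2
    simp only [glue, dif_neg h, dif_neg h2, Function.comp_apply]

variable {ρ : Matrix (QIdx N) (QIdx N) ℂ}

lemma rho_symm_fst (hsupp : SuppSymm ρ) (f g : QIdx N) (σ : Equiv.Perm (Fin N)) :
    ρ (f ∘ σ) g = ρ f g := by
  have h := hsupp (Pi.single g 1) σ f
  simpa using h

lemma rho_symm_snd (hPSD : ρ.PosSemidef) (hsupp : SuppSymm ρ)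
    (g f : QIdx N) (σ : Equiv.Perm (Fin N)) : ρ g (f ∘ σ) = ρ g f := by
  rw [← hPSD.1.apply, rho_symm_fst hsupp, hPSD.1.apply]

lemma ptrace_symm_snd (hPSD : ρ.PosSemidef) (hsupp : SuppSymm ρ)
    (x y : {i : Fin N // i ∉ S} → Fin 2) (τ : Equiv.Perm {i : Fin N // i ∉ S}) :
    ptrace S ρ x (y ∘ τ) = ptrace S ρ x y := by
  rw [ptrace_apply, ptrace_apply]
  refine Finset.sum_congr rfl fun z _ => ?_
  rw [glue_comp_perm, rho_symm_snd hPSD hsupp]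

end Symm

lemma sum_eq_zero_of_nonneg {α : Type*} {s : Finset α} {F : α → ℂ}
    (h0 : ∀ a ∈ s, 0 ≤ F a) (hs : ∑ a ∈ s, F a = 0) : ∀ a ∈ s, F a = 0 := by
  have hre : ∑ a ∈ s, (F a).re = 0 := by
    rw [← Complex.re_sum, hs, Complex.zero_re]
  have hre0 := (Finset.sum_eq_zero_iff_of_nonneg
    (fun a ha => (Complex.nonneg_iff.mp (h0 a ha)).1)).mp hre
  intro a ha
  have := Complex.nonneg_iff.mp (h0 a ha)
  exact Complex.ext (hre0 a ha) (this.2.symm)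

section Key

variable {N : ℕ} (S : Finset (Fin N)) {ρ : Matrix (QIdx N) (QIdx N) ℂ}

lemma quad_expand {n : Type*} [Fintype n] (M : Matrix n n ℂ) (v : n → ℂ) :
    star v ⬝ᵥ M *ᵥ v = ∑ f, ∑ g, star (v f) * M f g * v g := by
  rw [dotProduct]
  refine Finset.sum_congr rfl fun f _ => ?_
  rw [Matrix.mulVec, dotProduct, Finset.mul_sum]
  refine Finset.sum_congr rfl fun g _ => ?_
  rw [Pi.star_apply, mul_assoc]

lemma sum_quad_emb (φ : ({i : Fin N // i ∉ S} → Fin 2) → ℂ) :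
    ∑ z : ({i : Fin N // i ∈ S} → Fin 2), star (emb S z φ) ⬝ᵥ ρ *ᵥ emb S z φ
      = star φ ⬝ᵥ (ptrace S ρ) *ᵥ φ := by
  classical
  have lhs : ∀ z, star (emb S z φ) ⬝ᵥ ρ *ᵥ emb S z φ
      = ∑ x, ∑ x', star (φ x) * ρ (glue S z x) (glue S z x') * φ x' := by
    intro z
    rw [quad_expand]
    rw [← Equiv.sum_comp (splitEquiv S)
      (fun f => ∑ g, star (emb S z φ f) * ρ f g * emb S z φ g)]
    rw [Fintype.sum_prod_type]
    have inner : ∀ w x, (∑ g, star (emb S z φ (glue S w x)) * ρ (glue S w x) g * emb S z φ g)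
        = ∑ w', ∑ x', star (emb S z φ (glue S w x)) * ρ (glue S w x) (glue S w' x')
            * emb S z φ (glue S w' x') := by
      intro w x
      rw [← Equiv.sum_comp (splitEquiv S)
        (fun g => star (emb S z φ (glue S w x)) * ρ (glue S w x) g * emb S z φ g),
        Fintype.sum_prod_type]
      rfl
    calc (∑ w, ∑ x, ∑ g, star (emb S z φ ((splitEquiv S) (w, x)))
            * ρ ((splitEquiv S) (w, x)) g * emb S z φ g)
        = ∑ w, ∑ x, ∑ w', ∑ x', star (emb S z φ (glue S w x))
            * ρ (glue S w x) (glue S w' x') * emb S z φ (glue S w' x') := by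
          refine Finset.sum_congr rfl fun w _ => Finset.sum_congr rfl fun x _ => ?_
          exact inner w x
    _ = ∑ x, ∑ x', star (φ x) * ρ (glue S z x) (glue S z x') * φ x' := by
          simp only [emb_glue, apply_ite star, star_zero, ite_mul, zero_mul,
            mul_ite, mul_zero]
          rw [Fintype.sum_eq_single z (fun w hw => by simp [hw])]
          simp only [eq_self_iff_true, if_true]
          refine Finset.sum_congr rfl fun x _ => ?_
          rw [Fintype.sum_eq_single z (fun w' hw' => by simp [hw'])]
          simp
  rw [Finset.sum_congr rfl (fun z _ => lhs z), quad_expand]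
  rw [Finset.sum_comm]
  refine Finset.sum_congr rfl fun x _ => ?_
  rw [Finset.sum_comm]
  refine Finset.sum_congr rfl fun x' _ => ?_
  rw [ptrace_apply, Finset.mul_sum, Finset.sum_mul]

lemma emb_mulVec_eq_zero (hPSD : ρ.PosSemidef)
    {φ : ({i : Fin N // i ∉ S} → Fin 2) → ℂ} (hφ : (ptrace S ρ) *ᵥ φ = 0)
    (z : {i : Fin N // i ∈ S} → Fin 2) : ρ *ᵥ emb S z φ = 0 := by
  have hsum : ∑ z : ({i : Fin N // i ∈ S} → Fin 2),
      star (emb S z φ) ⬝ᵥ ρ *ᵥ emb S z φ = 0 := by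
    rw [sum_quad_emb, hφ, dotProduct_zero]
  have hz := sum_eq_zero_of_nonneg
    (fun z _ => hPSD.dotProduct_mulVec_nonneg (emb S z φ)) hsum z (Finset.mem_univ z)
  exact (hPSD.dotProduct_mulVec_zero_iff (emb S z φ)).mp hz

lemma Lmap_emb (φ : ({i : Fin N // i ∉ S} → Fin 2) → ℂ)
    (z : {i : Fin N // i ∈ S} → Fin 2) :
    Lmap (Fin N) (emb S z φ) = (X : ℂ[X]) ^ wt z * Lmap {i : Fin N // i ∉ S} φ := by
  classical
  rw [Lmap_apply, Lmap_apply, Finset.mul_sum]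
  rw [← Equiv.sum_comp (splitEquiv S) (fun f => emb S z φ f • (X : ℂ[X]) ^ wt f)]
  rw [Fintype.sum_prod_type]
  rw [Fintype.sum_eq_single z (fun w hw => by
    refine Finset.sum_eq_zero fun x _ => ?_
    show emb S z φ (glue S w x) • _ = 0
    rw [emb_glue, if_neg hw, zero_smul])]
  refine Finset.sum_congr rfl fun x _ => ?_
  show emb S z φ (glue S z x) • (X : ℂ[X]) ^ wt (glue S z x) = _
  rw [emb_glue, if_pos rfl, wt_glue, pow_add, mul_smul_comm]

end Key

lemma finrank_split {M₁ M₂ : Type*} [AddCommGroup M₁] [Module ℂ M₁]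
    [AddCommGroup M₂] [Module ℂ M₂] [FiniteDimensional ℂ M₁]
    (L : M₁ →ₗ[ℂ] M₂) (K : Submodule ℂ M₁) (h : LinearMap.ker L ≤ K) :
    Module.finrank ℂ K
      = Module.finrank ℂ (LinearMap.ker L) + Module.finrank ℂ (K.map L) := by
  have hrn := LinearMap.finrank_range_add_finrank_ker (L.domRestrict K)
  rw [LinearMap.range_domRestrict, LinearMap.ker_domRestrict] at hrn
  rw [(Submodule.comapSubtypeEquivOfLe h).finrank_eq] at hrn
  omega

lemma main {N : ℕ} (ρ : Matrix (QIdx N) (QIdx N) ℂ) (hPSD : ρ.PosSemidef)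
    (hsupp : SuppSymm ρ) (S : Finset (Fin N))
    (hrank : (ptrace S ρ).rank < Fintype.card {i : Fin N // i ∉ S} + 1) :
    ρ.rank ≤ (ptrace S ρ).rank := by
  classical
  have hnm : Fintype.card {i : Fin N // i ∈ S} + Fintype.card {i : Fin N // i ∉ S} = N := by
    rw [← Fintype.card_sum, Fintype.card_congr (Equiv.sumCompl (· ∈ S)), Fintype.card_fin]
  have hker1 : LinearMap.ker (Lmap {i : Fin N // i ∉ S})
      ≤ LinearMap.ker (ptrace S ρ).mulVecLin :=
    ker_Lmap_le_ker (fun x y τ => ptrace_symm_snd S hPSD hsupp x y τ)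
  have hker2 : LinearMap.ker (Lmap (Fin N)) ≤ LinearMap.ker ρ.mulVecLin :=
    ker_Lmap_le_ker (fun g f σ => rho_symm_snd hPSD hsupp g f σ)
  have e_pt : Module.finrank ℂ (LinearMap.ker (ptrace S ρ).mulVecLin)
      = Module.finrank ℂ (LinearMap.ker (Lmap {i : Fin N // i ∉ S}))
        + Module.finrank ℂ
            ((LinearMap.ker (ptrace S ρ).mulVecLin).map (Lmap {i : Fin N // i ∉ S})) :=
    finrank_split (Lmap {i : Fin N // i ∉ S}) _ hker1
  have e_rho : Module.finrank ℂ (LinearMap.ker ρ.mulVecLin)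
      = Module.finrank ℂ (LinearMap.ker (Lmap (Fin N)))
        + Module.finrank ℂ ((LinearMap.ker ρ.mulVecLin).map (Lmap (Fin N))) :=
    finrank_split (Lmap (Fin N)) _ hker2
  have a1 := LinearMap.finrank_range_add_finrank_ker (ptrace S ρ).mulVecLin
  simp only [Module.finrank_fintype_fun_eq_card, Fintype.card_fun, Fintype.card_fin] at a1
  have b1 := LinearMap.finrank_range_add_finrank_ker ρ.mulVecLin
  simp only [Module.finrank_fintype_fun_eq_card, Fintype.card_fun, Fintype.card_fin] at b1
  have a3 := finrank_ker_Lmap (ι := {i : Fin N // i ∉ S})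
  have b3 := finrank_ker_Lmap (ι := Fin N)
  simp only [Fintype.card_fin] at b3
  have hrank_eq : (ptrace S ρ).rank
      = Module.finrank ℂ (LinearMap.range (ptrace S ρ).mulVecLin) := rfl
  have hrank_eq' : ρ.rank = Module.finrank ℂ (LinearMap.range ρ.mulVecLin) := rfl
  rw [hrank_eq] at hrank
  rw [hrank_eq, hrank_eq']
  obtain ⟨Pn, hPn⟩ : ∃ P, P = 2 ^ Fintype.card {i : Fin N // i ∉ S} := ⟨_, rfl⟩
  obtain ⟨PN, hPN⟩ : ∃ P, P = 2 ^ N := ⟨_, rfl⟩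
  rw [← hPn] at a1 a3
  rw [← hPN] at b1 b3
  -- V is nonzero and of bounded degree
  have hVle : (LinearMap.ker (ptrace S ρ).mulVecLin).map (Lmap {i : Fin N // i ∉ S})
      ≤ degreeLT ℂ (Fintype.card {i : Fin N // i ∉ S} + 1) := by
    rw [← range_Lmap]
    rintro q ⟨ψ, -, rfl⟩
    exact ⟨ψ, rfl⟩
  have hvr : Module.finrank ℂ
        ((LinearMap.ker (ptrace S ρ).mulVecLin).map (Lmap {i : Fin N // i ∉ S}))
      + Module.finrank ℂ (LinearMap.range (ptrace S ρ).mulVecLin)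
      = Fintype.card {i : Fin N // i ∉ S} + 1 := by omega
  have hVne : (LinearMap.ker (ptrace S ρ).mulVecLin).map (Lmap {i : Fin N // i ∉ S}) ≠ ⊥ := by
    intro hc
    rw [hc, finrank_bot] at hvr
    omega
  -- T is finite dimensional
  have hTle : (LinearMap.ker ρ.mulVecLin).map (Lmap (Fin N))
      ≤ degreeLT ℂ (N + 1) := by
    have h2 : (LinearMap.ker ρ.mulVecLin).map (Lmap (Fin N))
        ≤ LinearMap.range (Lmap (Fin N)) := by
      rintro q ⟨ψ, -, rfl⟩
      exact ⟨ψ, rfl⟩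
    rwa [range_Lmap, Fintype.card_fin] at h2
  haveI : FiniteDimensional ℂ (degreeLT ℂ (N + 1)) :=
    FiniteDimensional.of_finrank_eq_succ (n := N) (finrank_degreeLT (N + 1))
  haveI : FiniteDimensional ℂ
      ((LinearMap.ker ρ.mulVecLin).map (Lmap (Fin N)) : Submodule ℂ ℂ[X]) :=
    Submodule.finiteDimensional_of_le hTle
  -- the span inclusion
  have hTj : ∀ j ≤ Fintype.card {i : Fin N // i ∈ S},
      ((LinearMap.ker (ptrace S ρ).mulVecLin).map (Lmap {i : Fin N // i ∉ S})).map
          (LinearMap.mulLeft ℂ ((X : ℂ[X]) ^ j))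
        ≤ (LinearMap.ker ρ.mulVecLin).map (Lmap (Fin N)) := by
    intro j hj
    rintro q ⟨p, ⟨ψ, hψ, rfl⟩, rfl⟩
    obtain ⟨z, hz⟩ := exists_wt (ι := {i : Fin N // i ∈ S}) j hj
    have hψ0 : (ptrace S ρ) *ᵥ ψ = 0 := hψ
    refine ⟨emb S z ψ, ?_, ?_⟩
    · show ρ *ᵥ emb S z ψ = 0
      exact emb_mulVec_eq_zero S hPSD hψ0 z
    · rw [Lmap_emb, hz]
      rfl
  have hps : Module.finrank ℂ
        ((LinearMap.ker (ptrace S ρ).mulVecLin).map (Lmap {i : Fin N // i ∉ S}))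
      + Fintype.card {i : Fin N // i ∈ S}
      ≤ Module.finrank ℂ ((LinearMap.ker ρ.mulVecLin).map (Lmap (Fin N))) :=
    poly_span _ (Fintype.card {i : Fin N // i ∉ S} + 1) hVle hVne
      (Fintype.card {i : Fin N // i ∈ S}) _ hTj
  omega

lemma card_not_mem (N : ℕ) (S : Finset (Fin N)) :
    Fintype.card {i : Fin N // i ∉ S} = N - S.card := by
  classical
  rw [Fintype.card_subtype_compl, Fintype.card_fin]
  congr 1
  exact Fintype.card_coe S

lemma card_not_mem_compl (N : ℕ) (S : Finset (Fin N)) :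
    Fintype.card {i : Fin N // i ∉ Sᶜ} = S.card := by
  classical
  rw [Fintype.card_congr (Equiv.subtypeEquivRight (q := fun i => i ∈ S)
    (fun i => by simp))]
  exact Fintype.card_coe S

end Stmt7Aux

/-- for an `N`-qubit symmetric state `ρ` and a bipartition `S|S̄` with
`|S| ≤ N - |S|`: if the reduced state `ρ_{S̄} = Tr_S ρ` has a nontrivial kernel (as an
operator on `S_{N-|S|} ≅ ℂ^{N-|S|+1}`, i.e. its rank is `< N-|S|+1`) then
`rank ρ ≤ rank ρ_{S̄}`; symmetrically for `ρ_S = Tr_{S̄} ρ`. -/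
theorem stmt7 (N : ℕ) (ρ : Matrix (QIdx N) (QIdx N) ℂ)
    (hPSD : ρ.PosSemidef) (hsupp : SuppSymm ρ)
    (S : Finset (Fin N)) (hS : 2 * S.card ≤ N) :
    ((ptrace S ρ).rank < N - S.card + 1 → ρ.rank ≤ (ptrace S ρ).rank) ∧
    ((ptrace Sᶜ ρ).rank < S.card + 1 → ρ.rank ≤ (ptrace Sᶜ ρ).rank) := by
  constructor
  · intro h
    apply Stmt7Aux.main ρ hPSD hsupp S
    rwa [Stmt7Aux.card_not_mem]
  · intro h
    apply Stmt7Aux.main ρ hPSD hsupp Sᶜ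
    rwa [Stmt7Aux.card_not_mem_compl]
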